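/- Let I ⊂ ℤ^d be finite and let Λ = Λ(z_1,M_1,…,z_L,M_L) be a multiple rank-1 lattice satisfying: for each ℓ there is I_ℓ ⊆ I with k·z_ℓ ≢ k'·z_ℓ (mod M_ℓ) for all k ∈ I_ℓ, k' ∈ I, k ≠ k', and ∪_ℓ I_ℓ = I. Then any trigonometric polynomial p with support contained in I is uniquely determined by its values on Λ; i.e., if p and q are trigonometric polynomials supported on I agreeing on all nodes of Λ, then p = q. -/

import Mathlib

lemma rootsum (m : ℕ) (hm : 0 < m) (a : ℤ) :
    ∑ j ∈ Finset.range m, Complex.exp (2 * Real.pi * Complex.I * ((j : ℂ) * (a : ℂ) / (m : ℂ))) =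
    if (m : ℤ) ∣ a then (m : ℂ) else 0 := by
  have hmC : (m : ℂ) ≠ 0 := by exact_mod_cast hm.ne'
  set ω : ℂ := Complex.exp (2 * Real.pi * Complex.I * ((a : ℂ) / m)) with hω
  have hpow : ∀ j : ℕ, Complex.exp (2 * Real.pi * Complex.I * ((j:ℂ) * (a:ℂ) / m)) = ω ^ j := by
    intro j
    rw [hω, ← Complex.exp_nat_mul]
    congr 1
    ring
  rw [Finset.sum_congr rfl fun j _ => hpow j]
  by_cases hd : (m : ℤ) ∣ a
  · obtain ⟨c, rfl⟩ := hd
    have hω' : ω = 1 := by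
      rw [hω]
      have h1 : 2 * (Real.pi:ℂ) * Complex.I * ((((m:ℤ) * c : ℤ) : ℂ) / m) = c * (2 * Real.pi * Complex.I) := by
        push_cast
        field_simp
      rw [h1]
      exact Complex.exp_int_mul_two_pi_mul_I c
    simp [hω', Dvd.intro c rfl, mul_comm]
  · have hω1 : ω ≠ 1 := by
      intro h
      rw [hω, Complex.exp_eq_one_iff] at h
      obtain ⟨n, hn⟩ := h
      apply hd
      have hπ : (2 * Real.pi * Complex.I) ≠ 0 := by
        simp [Real.pi_ne_zero, Complex.I_ne_zero, Complex.ofReal_ne_zero]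
      have hac : (a : ℂ) = m * n := by
        field_simp at hn
        apply mul_left_cancel₀ hπ
        rw [hn]
      exact ⟨n, by exact_mod_cast hac⟩
    rw [geom_sum_eq hω1]
    have hωm : ω ^ m = 1 := by
      rw [hω, ← Complex.exp_nat_mul]
      have h2 : (m:ℂ) * (2 * Real.pi * Complex.I * ((a:ℂ)/m)) = a * (2 * Real.pi * Complex.I) := by
        field_simp
      rw [h2]
      exact Complex.exp_int_mul_two_pi_mul_I a
    simp [hωm, hd]


/-- If the multiple rank-1 lattice `Λ(z_1,M_1,…,z_L,M_L)` satisfies the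
reconstruction condition (2.2): for each `ℓ` there is `I_ℓ ⊆ I` such that
`k·z_ℓ ≢ k'·z_ℓ (mod M_ℓ)` for all `k ∈ I_ℓ`, `k' ∈ I`, `k ≠ k'`, and `∪_ℓ I_ℓ = I`,
then trigonometric polynomials supported on `I` are uniquely determined by their values
on the lattice nodes: if `p` and `q` agree on all nodes, then `p = q`. -/
theorem stmt17 {d L : ℕ} (I : Finset (Fin d → ℤ))
    (z : Fin L → Fin d → ℤ) (M : Fin L → ℕ) (hM : ∀ ℓ, 0 < M ℓ)
    (Isub : Fin L → Finset (Fin d → ℤ))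
    (hIsub : ∀ ℓ, Isub ℓ ⊆ I)
    (hnoalias : ∀ ℓ, ∀ k ∈ Isub ℓ, ∀ k' ∈ I, k ≠ k' →
      ¬ Int.ModEq ((M ℓ : ℕ) : ℤ) (∑ i, k i * z ℓ i) (∑ i, k' i * z ℓ i))
    (hcover : ∀ k ∈ I, ∃ ℓ, k ∈ Isub ℓ)
    (phat qhat : (Fin d → ℤ) → ℂ)
    (p q : (Fin d → ℝ) → ℂ)
    (hp : p = fun x => ∑ k ∈ I, phat k *
      Complex.exp (2 * Real.pi * Complex.I * ((∑ i, (k i : ℝ) * x i : ℝ) : ℂ)))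
    (hq : q = fun x => ∑ k ∈ I, qhat k *
      Complex.exp (2 * Real.pi * Complex.I * ((∑ i, (k i : ℝ) * x i : ℝ) : ℂ)))
    (hagree : ∀ ℓ, ∀ j ∈ Finset.range (M ℓ),
      p (fun i => (j : ℝ) * (z ℓ i : ℝ) / (M ℓ : ℝ)) =
      q (fun i => (j : ℝ) * (z ℓ i : ℝ) / (M ℓ : ℝ))) :
    p = q := by
  have key : ∀ k ∈ I, phat k = qhat k := by
    intro k0 hk0I
    obtain ⟨ℓ, hk0⟩ := hcover k0 hk0I
    have hm0 : ((M ℓ : ℕ) : ℂ) ≠ 0 := by exact_mod_cast (hM ℓ).ne'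
    set a : (Fin d → ℤ) → ℤ := fun k => ∑ i, k i * z ℓ i with ha
    -- the exponent at a lattice node
    have hnode : ∀ (j : ℕ) (k : Fin d → ℤ),
        ((∑ i, (k i : ℝ) * ((j : ℝ) * (z ℓ i : ℝ) / (M ℓ : ℝ)) : ℝ) : ℂ)
          = (j : ℂ) * ((a k : ℤ) : ℂ) / ((M ℓ : ℕ) : ℂ) := by
      intro j k
      have : (∑ i, (k i : ℝ) * ((j : ℝ) * (z ℓ i : ℝ) / (M ℓ : ℝ)))
          = (j : ℝ) * ((a k : ℤ) : ℝ) / (M ℓ : ℝ) := by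
        rw [ha]
        push_cast
        rw [Finset.mul_sum, Finset.sum_div]
        exact Finset.sum_congr rfl fun i _ => by ring
      rw [this]
      push_cast
      ring
    -- the twisted sum
    have hS : ∑ j ∈ Finset.range (M ℓ),
        (p (fun i => (j : ℝ) * (z ℓ i : ℝ) / (M ℓ : ℝ))
          - q (fun i => (j : ℝ) * (z ℓ i : ℝ) / (M ℓ : ℝ)))
          * Complex.exp (-(2 * Real.pi * Complex.I * ((j : ℂ) * ((a k0 : ℤ) : ℂ) / ((M ℓ : ℕ) : ℂ)))) = 0 :=
      Finset.sum_eq_zero fun j hj => by rw [hagree ℓ j hj, sub_self, zero_mul]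
    -- expand the twisted sum
    have hexp : ∀ j ∈ Finset.range (M ℓ),
        (p (fun i => (j : ℝ) * (z ℓ i : ℝ) / (M ℓ : ℝ))
          - q (fun i => (j : ℝ) * (z ℓ i : ℝ) / (M ℓ : ℝ)))
          * Complex.exp (-(2 * Real.pi * Complex.I * ((j : ℂ) * ((a k0 : ℤ) : ℂ) / ((M ℓ : ℕ) : ℂ))))
        = ∑ k ∈ I, (phat k - qhat k) *
            Complex.exp (2 * Real.pi * Complex.I * ((j : ℂ) * (((a k - a k0 : ℤ)) : ℂ) / ((M ℓ : ℕ) : ℂ))) := by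
      intro j _
      rw [hp, hq]
      simp only
      rw [← Finset.sum_sub_distrib, Finset.sum_mul]
      refine Finset.sum_congr rfl fun k _ => ?_
      rw [hnode j k, ← sub_mul, mul_assoc, ← Complex.exp_add]
      congr 2
      push_cast
      field_simp
      ring
    rw [Finset.sum_congr rfl hexp, Finset.sum_comm] at hS
    have hinner : ∀ k ∈ I,
        (∑ j ∈ Finset.range (M ℓ), (phat k - qhat k) *
          Complex.exp (2 * Real.pi * Complex.I * ((j : ℂ) * (((a k - a k0 : ℤ)) : ℂ) / ((M ℓ : ℕ) : ℂ))))
        = (phat k - qhat k) * (if ((M ℓ : ℕ) : ℤ) ∣ (a k - a k0) then ((M ℓ : ℕ) : ℂ) else 0) := by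
      intro k _
      rw [← Finset.mul_sum, rootsum (M ℓ) (hM ℓ) (a k - a k0)]
    rw [Finset.sum_congr rfl hinner] at hS
    have hfinal : ∑ k ∈ I, (phat k - qhat k) *
        (if ((M ℓ : ℕ) : ℤ) ∣ (a k - a k0) then ((M ℓ : ℕ) : ℂ) else 0)
        = (phat k0 - qhat k0) * ((M ℓ : ℕ) : ℂ) := by
      rw [Finset.sum_eq_single k0]
      · simp [dvd_refl]
      · intro k hkI hkne
        have hnal := hnoalias ℓ k0 hk0 k hkI (Ne.symm hkne)
        rw [Int.modEq_iff_dvd] at hnal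
        simp [hnal]
        exact fun h => absurd h hnal
      · intro h; exact absurd hk0I h
    rw [hfinal] at hS
    have := (mul_eq_zero.mp hS).resolve_right hm0
    linear_combination this
  rw [hp, hq]
  funext x
  exact Finset.sum_congr rfl fun k hk => by rw [key k hk]
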